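/- For u = (u_∅, u_1, u_2, u_3, u_{12}, u_{13}, u_{23}, u_{123}) = (2, 1, 3, 7, 9, 10, 19, 22), the symmetric matrix Θ̂ with rows (2, 0, 2), (0, 4, 3), (2, 3, 7) is positive definite and is a critical point of L_u: all six partial derivatives of L_u with respect to θ_{11}, θ_{12}, θ_{13}, θ_{22}, θ_{23}, θ_{33} vanish at Θ̂. -/

import Mathlib

/-- The log-likelihood function of the 3×3 DPP model in the six entries
`(θ₁₁, θ₁₂, θ₁₃, θ₂₂, θ₂₃, θ₃₃)` of a symmetric matrix, for data
`u = (u∅, u₁, u₂, u₃, u₁₂, u₁₃, u₂₃, u₁₂₃)`. -/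
noncomputable def L3 (u0 u1 u2 u3 u12 u13 u23 u123 : ℝ)
    (t11 t12 t13 t22 t23 t33 : ℝ) : ℝ :=
  u1 * Real.log t11 + u2 * Real.log t22 + u3 * Real.log t33
    + u12 * Real.log (t11 * t22 - t12 ^ 2)
    + u13 * Real.log (t11 * t33 - t13 ^ 2)
    + u23 * Real.log (t22 * t33 - t23 ^ 2)
    + u123 * Real.log (Matrix.det !![t11, t12, t13; t12, t22, t23; t13, t23, t33])
    - (u0 + u1 + u2 + u3 + u12 + u13 + u23 + u123) *
        Real.log (Matrix.det (!![t11, t12, t13; t12, t22, t23; t13, t23, t33] + 1))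

/-- All six partial derivatives of `L_u` with respect to
`θ₁₁, θ₁₂, θ₁₃, θ₂₂, θ₂₃, θ₃₃` vanish at `(t11, t12, t13, t22, t23, t33)`. -/
noncomputable def IsCritical3 (u0 u1 u2 u3 u12 u13 u23 u123 : ℝ)
    (t11 t12 t13 t22 t23 t33 : ℝ) : Prop :=
  deriv (fun s => L3 u0 u1 u2 u3 u12 u13 u23 u123 s t12 t13 t22 t23 t33) t11 = 0 ∧
  deriv (fun s => L3 u0 u1 u2 u3 u12 u13 u23 u123 t11 s t13 t22 t23 t33) t12 = 0 ∧
  deriv (fun s => L3 u0 u1 u2 u3 u12 u13 u23 u123 t11 t12 s t22 t23 t33) t13 = 0 ∧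
  deriv (fun s => L3 u0 u1 u2 u3 u12 u13 u23 u123 t11 t12 t13 s t23 t33) t22 = 0 ∧
  deriv (fun s => L3 u0 u1 u2 u3 u12 u13 u23 u123 t11 t12 t13 t22 s t33) t23 = 0 ∧
  deriv (fun s => L3 u0 u1 u2 u3 u12 u13 u23 u123 t11 t12 t13 t22 t23 s) t33 = 0

/-- For the data `u = (2, 1, 3, 7, 9, 10, 19, 22)`, the symmetric matrix with rows
`(2, 0, 2)`, `(0, 4, 3)`, `(2, 3, 7)` is positive definite and is a critical point
of the log-likelihood `L_u`. -/

lemma det3 (a b c d e f g h i : ℝ) :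
    Matrix.det !![a,b,c;d,e,f;g,h,i] = a*e*i - a*f*h - b*d*i + b*f*g + c*d*h - c*e*g := by
  simp [Matrix.det_fin_three]

lemma add_one3 (a b c d e f g h i : ℝ) :
    (!![a,b,c;d,e,f;g,h,i] + 1) = !![a+1,b,c;d,e+1,f;g,h,i+1] := by
  ext i j
  fin_cases i <;> fin_cases j <;> simp [Matrix.one_apply]

lemma hlog (c a b c0 x : ℝ) (h : a*x^2 + b*x + c0 ≠ 0) :
    HasDerivAt (fun s => c * Real.log (a*s^2 + b*s + c0))
      (c * ((2*a*x + b) / (a*x^2 + b*x + c0))) x := by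
  have hq : HasDerivAt (fun s : ℝ => a*s^2 + b*s + c0) (2*a*x + b) x := by
    have h1 := (hasDerivAt_pow 2 x).const_mul a
    have h2 := (hasDerivAt_id x).const_mul b
    refine ((h1.add h2).add_const c0).congr_deriv ?_
    · push_cast; ring
  exact (hq.log h).const_mul c

lemma ofM (i j : Fin 3) :
    Matrix.of !![(2 : ℝ), 0, 2; 0, 4, 3; 2, 3, 7] i j = !![(2 : ℝ), 0, 2; 0, 4, 3; 2, 3, 7] i j := rfl

theorem special_matrix_critical :
    (Matrix.of !![(2 : ℝ), 0, 2; 0, 4, 3; 2, 3, 7]).PosDef ∧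
      IsCritical3 2 1 3 7 9 10 19 22 2 0 2 4 3 7 := by
  constructor
  · constructor
    · ext i j; fin_cases i <;> fin_cases j <;> simp [Matrix.conjTranspose, ofM]
    · intro x hx
      have h : x 0 ≠ 0 ∨ x 1 ≠ 0 ∨ x 2 ≠ 0 := by
        by_contra h
        push_neg at h
        exact hx (Finsupp.ext fun i => by fin_cases i <;> simp [h.1, h.2.1, h.2.2])
      simp [Finsupp.sum_fintype, dotProduct, Matrix.mulVec, Fin.sum_univ_three, ofM]
      rcases h with h | h | h <;>
      · have h0 := lt_of_le_of_ne (sq_nonneg _) (Ne.symm (pow_ne_zero 2 h))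
        nlinarith [sq_nonneg (x 0 + x 2), sq_nonneg (4 * x 1 + 3 * x 2), sq_nonneg (x 2), h0]
  ·
    have case1 : deriv (fun s : ℝ => L3 2 1 3 7 9 10 19 22 s 0 2 4 3 7) 2 = 0 := by
      have key : (fun s : ℝ => L3 2 1 3 7 9 10 19 22 s 0 2 4 3 7) = (fun s : ℝ => (1 : ℝ) * Real.log (0*s^2 + 1*s + 0) + (3 : ℝ) * Real.log (0*s^2 + 0*s + 4) + (7 : ℝ) * Real.log (0*s^2 + 0*s + 7) + (9 : ℝ) * Real.log (0*s^2 + 4*s + 0) + (10 : ℝ) * Real.log (0*s^2 + 7*s + (-4)) + (19 : ℝ) * Real.log (0*s^2 + 0*s + 19) + (22 : ℝ) * Real.log (0*s^2 + 19*s + (-16)) - (73 : ℝ) * Real.log (0*s^2 + 31*s + 11)) := by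
        funext s
        simp only [L3, add_one3, det3]
        ring_nf
      have h1 := hlog 1 0 1 0 2 (by norm_num)
      have h2 := hlog 3 0 0 4 2 (by norm_num)
      have h3 := hlog 7 0 0 7 2 (by norm_num)
      have h4 := hlog 9 0 4 0 2 (by norm_num)
      have h5 := hlog 10 0 7 (-4) 2 (by norm_num)
      have h6 := hlog 19 0 0 19 2 (by norm_num)
      have h7 := hlog 22 0 19 (-16) 2 (by norm_num)
      have h8 := hlog 73 0 31 11 2 (by norm_num)
      rw [key]
      exact (((((((h1.add h2).add h3).add h4).add h5).add h6).add h7).sub h8).deriv.trans (by norm_num)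
    have case2 : deriv (fun s : ℝ => L3 2 1 3 7 9 10 19 22 2 s 2 4 3 7) 0 = 0 := by
      have key : (fun s : ℝ => L3 2 1 3 7 9 10 19 22 2 s 2 4 3 7) = (fun s : ℝ => (1 : ℝ) * Real.log (0*s^2 + 0*s + 2) + (3 : ℝ) * Real.log (0*s^2 + 0*s + 4) + (7 : ℝ) * Real.log (0*s^2 + 0*s + 7) + (9 : ℝ) * Real.log ((-1)*s^2 + 0*s + 8) + (10 : ℝ) * Real.log (0*s^2 + 0*s + 10) + (19 : ℝ) * Real.log (0*s^2 + 0*s + 19) + (22 : ℝ) * Real.log ((-7)*s^2 + 12*s + 22) - (73 : ℝ) * Real.log ((-8)*s^2 + 12*s + 73)) := by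
        funext s
        simp only [L3, add_one3, det3]
        ring_nf
      have h1 := hlog 1 0 0 2 0 (by norm_num)
      have h2 := hlog 3 0 0 4 0 (by norm_num)
      have h3 := hlog 7 0 0 7 0 (by norm_num)
      have h4 := hlog 9 (-1) 0 8 0 (by norm_num)
      have h5 := hlog 10 0 0 10 0 (by norm_num)
      have h6 := hlog 19 0 0 19 0 (by norm_num)
      have h7 := hlog 22 (-7) 12 22 0 (by norm_num)
      have h8 := hlog 73 (-8) 12 73 0 (by norm_num)
      rw [key]
      exact (((((((h1.add h2).add h3).add h4).add h5).add h6).add h7).sub h8).deriv.trans (by norm_num)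
    have case3 : deriv (fun s : ℝ => L3 2 1 3 7 9 10 19 22 2 0 s 4 3 7) 2 = 0 := by
      have key : (fun s : ℝ => L3 2 1 3 7 9 10 19 22 2 0 s 4 3 7) = (fun s : ℝ => (1 : ℝ) * Real.log (0*s^2 + 0*s + 2) + (3 : ℝ) * Real.log (0*s^2 + 0*s + 4) + (7 : ℝ) * Real.log (0*s^2 + 0*s + 7) + (9 : ℝ) * Real.log (0*s^2 + 0*s + 8) + (10 : ℝ) * Real.log ((-1)*s^2 + 0*s + 14) + (19 : ℝ) * Real.log (0*s^2 + 0*s + 19) + (22 : ℝ) * Real.log ((-4)*s^2 + 0*s + 38) - (73 : ℝ) * Real.log ((-5)*s^2 + 0*s + 93)) := by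
        funext s
        simp only [L3, add_one3, det3]
        ring_nf
      have h1 := hlog 1 0 0 2 2 (by norm_num)
      have h2 := hlog 3 0 0 4 2 (by norm_num)
      have h3 := hlog 7 0 0 7 2 (by norm_num)
      have h4 := hlog 9 0 0 8 2 (by norm_num)
      have h5 := hlog 10 (-1) 0 14 2 (by norm_num)
      have h6 := hlog 19 0 0 19 2 (by norm_num)
      have h7 := hlog 22 (-4) 0 38 2 (by norm_num)
      have h8 := hlog 73 (-5) 0 93 2 (by norm_num)
      rw [key]
      exact (((((((h1.add h2).add h3).add h4).add h5).add h6).add h7).sub h8).deriv.trans (by norm_num)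
    have case4 : deriv (fun s : ℝ => L3 2 1 3 7 9 10 19 22 2 0 2 s 3 7) 4 = 0 := by
      have key : (fun s : ℝ => L3 2 1 3 7 9 10 19 22 2 0 2 s 3 7) = (fun s : ℝ => (1 : ℝ) * Real.log (0*s^2 + 0*s + 2) + (3 : ℝ) * Real.log (0*s^2 + 1*s + 0) + (7 : ℝ) * Real.log (0*s^2 + 0*s + 7) + (9 : ℝ) * Real.log (0*s^2 + 2*s + 0) + (10 : ℝ) * Real.log (0*s^2 + 0*s + 10) + (19 : ℝ) * Real.log (0*s^2 + 7*s + (-9)) + (22 : ℝ) * Real.log (0*s^2 + 10*s + (-18)) - (73 : ℝ) * Real.log (0*s^2 + 20*s + (-7))) := by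
        funext s
        simp only [L3, add_one3, det3]
        ring_nf
      have h1 := hlog 1 0 0 2 4 (by norm_num)
      have h2 := hlog 3 0 1 0 4 (by norm_num)
      have h3 := hlog 7 0 0 7 4 (by norm_num)
      have h4 := hlog 9 0 2 0 4 (by norm_num)
      have h5 := hlog 10 0 0 10 4 (by norm_num)
      have h6 := hlog 19 0 7 (-9) 4 (by norm_num)
      have h7 := hlog 22 0 10 (-18) 4 (by norm_num)
      have h8 := hlog 73 0 20 (-7) 4 (by norm_num)
      rw [key]
      exact (((((((h1.add h2).add h3).add h4).add h5).add h6).add h7).sub h8).deriv.trans (by norm_num)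
    have case5 : deriv (fun s : ℝ => L3 2 1 3 7 9 10 19 22 2 0 2 4 s 7) 3 = 0 := by
      have key : (fun s : ℝ => L3 2 1 3 7 9 10 19 22 2 0 2 4 s 7) = (fun s : ℝ => (1 : ℝ) * Real.log (0*s^2 + 0*s + 2) + (3 : ℝ) * Real.log (0*s^2 + 0*s + 4) + (7 : ℝ) * Real.log (0*s^2 + 0*s + 7) + (9 : ℝ) * Real.log (0*s^2 + 0*s + 8) + (10 : ℝ) * Real.log (0*s^2 + 0*s + 10) + (19 : ℝ) * Real.log ((-1)*s^2 + 0*s + 28) + (22 : ℝ) * Real.log ((-2)*s^2 + 0*s + 40) - (73 : ℝ) * Real.log ((-3)*s^2 + 0*s + 100)) := by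
        funext s
        simp only [L3, add_one3, det3]
        ring_nf
      have h1 := hlog 1 0 0 2 3 (by norm_num)
      have h2 := hlog 3 0 0 4 3 (by norm_num)
      have h3 := hlog 7 0 0 7 3 (by norm_num)
      have h4 := hlog 9 0 0 8 3 (by norm_num)
      have h5 := hlog 10 0 0 10 3 (by norm_num)
      have h6 := hlog 19 (-1) 0 28 3 (by norm_num)
      have h7 := hlog 22 (-2) 0 40 3 (by norm_num)
      have h8 := hlog 73 (-3) 0 100 3 (by norm_num)
      rw [key]
      exact (((((((h1.add h2).add h3).add h4).add h5).add h6).add h7).sub h8).deriv.trans (by norm_num)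
    have case6 : deriv (fun s : ℝ => L3 2 1 3 7 9 10 19 22 2 0 2 4 3 s) 7 = 0 := by
      have key : (fun s : ℝ => L3 2 1 3 7 9 10 19 22 2 0 2 4 3 s) = (fun s : ℝ => (1 : ℝ) * Real.log (0*s^2 + 0*s + 2) + (3 : ℝ) * Real.log (0*s^2 + 0*s + 4) + (7 : ℝ) * Real.log (0*s^2 + 1*s + 0) + (9 : ℝ) * Real.log (0*s^2 + 0*s + 8) + (10 : ℝ) * Real.log (0*s^2 + 2*s + (-4)) + (19 : ℝ) * Real.log (0*s^2 + 4*s + (-9)) + (22 : ℝ) * Real.log (0*s^2 + 8*s + (-34)) - (73 : ℝ) * Real.log (0*s^2 + 15*s + (-32))) := by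
        funext s
        simp only [L3, add_one3, det3]
        ring_nf
      have h1 := hlog 1 0 0 2 7 (by norm_num)
      have h2 := hlog 3 0 0 4 7 (by norm_num)
      have h3 := hlog 7 0 1 0 7 (by norm_num)
      have h4 := hlog 9 0 0 8 7 (by norm_num)
      have h5 := hlog 10 0 2 (-4) 7 (by norm_num)
      have h6 := hlog 19 0 4 (-9) 7 (by norm_num)
      have h7 := hlog 22 0 8 (-34) 7 (by norm_num)
      have h8 := hlog 73 0 15 (-32) 7 (by norm_num)
      rw [key]
      exact (((((((h1.add h2).add h3).add h4).add h5).add h6).add h7).sub h8).deriv.trans (by norm_num)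

    exact ⟨case1, case2, case3, case4, case5, case6⟩
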